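/- For every affine hyperplane H of F_5^n not containing the origin, the set H ∪ (-H) is sum-free and has cardinality 2·5^(n-1). -/

import Mathlib

open Pointwise

lemma zmod5_aux (c a b : ZMod 5) (hc : c ≠ 0) (ha : a = c ∨ a = -c)
    (hb : b = c ∨ b = -c) : ¬(a + b = c ∨ a + b = -c) := by
  revert hc ha hb; revert c a b; decide

lemma fiber_card (n : ℕ) (φ : (Fin n → ZMod 5) →ₗ[ZMod 5] ZMod 5)
    (hφ : Function.Surjective φ) (a : ZMod 5) :
    Set.ncard {x | φ x = a} = 5 ^ (n - 1) := by
  have hn : n ≠ 0 := by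
    rintro rfl
    obtain ⟨x, hx⟩ := hφ 1
    have : x = 0 := Subsingleton.elim _ _
    rw [this, map_zero] at hx
    exact absurd hx (by decide)
  -- kernel cardinality
  have hcardDom : Nat.card (Fin n → ZMod 5) = 5 ^ n := by
    simp [Nat.card_fun, Nat.card_eq_fintype_card]
  have hquot : Nat.card ((Fin n → ZMod 5) ⧸ LinearMap.ker φ) = 5 :=
    (Nat.card_congr (φ.quotKerEquivOfSurjective hφ).toEquiv).trans
      (by simp [Nat.card_eq_fintype_card])
  have hker : Nat.card (LinearMap.ker φ) = 5 ^ (n - 1) := by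
    have := AddSubgroup.card_eq_card_quotient_mul_card_addSubgroup
      (LinearMap.ker φ).toAddSubgroup
    rw [hcardDom] at this
    have hq : Nat.card ((Fin n → ZMod 5) ⧸ (LinearMap.ker φ).toAddSubgroup) = 5 := hquot
    rw [hq] at this
    have hKeq : Nat.card (LinearMap.ker φ).toAddSubgroup = Nat.card (LinearMap.ker φ) := rfl
    rw [hKeq] at this
    have h5 : (5:ℕ) ^ n = 5 ^ (n - 1) * 5 := by
      rw [← pow_succ]; congr 1; omega
    rw [h5] at this
    omega
  obtain ⟨x0, hx0⟩ := hφ a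
  have himg : {x | φ x = a} = (fun y => x0 + y) '' (LinearMap.ker φ : Set _) := by
    ext x
    simp only [Set.mem_setOf_eq, Set.mem_image, SetLike.mem_coe, LinearMap.mem_ker]
    constructor
    · intro hx
      exact ⟨x - x0, by simp [map_sub, hx, hx0], by ring⟩
    · rintro ⟨y, hy, rfl⟩
      simp [map_add, hy, hx0]
  rw [himg, Set.ncard_image_of_injective _ (add_right_injective x0)]
  rw [← Nat.card_coe_set_eq]
  simpa using hker

theorem stmt_3 (n : ℕ) (φ : (Fin n → ZMod 5) →ₗ[ZMod 5] ZMod 5)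
    (hφ : Function.Surjective φ) (c : ZMod 5) (hc : c ≠ 0)
    (H : Set (Fin n → ZMod 5)) (hH : H = {x | φ x = c}) :
    (∀ x ∈ H ∪ -H, ∀ y ∈ H ∪ -H, x + y ∉ H ∪ -H) ∧
      (H ∪ -H).ncard = 2 * 5 ^ (n - 1) := by
  subst hH
  have hmem : ∀ x, x ∈ ({x | φ x = c} ∪ -{x | φ x = c} : Set _) ↔ φ x = c ∨ φ x = -c := by
    intro x
    simp only [Set.mem_union, Set.mem_neg, Set.mem_setOf_eq, map_neg]
    constructor
    · rintro (h | h)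
      · exact Or.inl h
      · exact Or.inr (by linear_combination -h)
    · rintro (h | h)
      · exact Or.inl h
      · exact Or.inr (by linear_combination -h)
  constructor
  · intro x hx y hy hxy
    rw [hmem] at hx hy hxy
    rw [map_add] at hxy
    exact zmod5_aux c (φ x) (φ y) hc hx hy hxy
  · have hneg : (-{x | φ x = c} : Set (Fin n → ZMod 5)) = {x | φ x = -c} := by
      ext x
      simp only [Set.mem_neg, Set.mem_setOf_eq, map_neg]
      constructor
      · intro h; linear_combination -h
      · intro h; linear_combination -h
    rw [hneg]
    have hdisj : Disjoint {x | φ x = c} {x | φ x = -c} := by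
      rw [Set.disjoint_left]
      intro x hx hx'
      simp only [Set.mem_setOf_eq] at hx hx'
      have : c = -c := hx ▸ hx'
      have h2 : (2 : ZMod 5) * c = 0 := by linear_combination this
      have h20 : (2 : ZMod 5) ≠ 0 := by decide
      haveI : Fact (Nat.Prime 5) := ⟨by norm_num⟩
      rcases mul_eq_zero.mp h2 with h | h
      · exact absurd h h20
      · exact hc h
    rw [Set.ncard_union_eq hdisj (Set.toFinite _) (Set.toFinite _),
      fiber_card n φ hφ c, fiber_card n φ hφ (-c)]
    ring
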